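/- arXiv:0902.4098 — 2 statements merged into one kernel-verified Lean document; each statement's English description precedes it below -/
import Mathlib

section
/- Let L̃ be a standardized Laplacian matrix of order n, J the n×n matrix with all entries 1/n, K = I − J, P = L̃ + J, and L̃_c = K − L̃. Then for every λ ∉ {0,1}: λ is an eigenvalue of L̃ iff λ is an eigenvalue of P iff 1−λ is an eigenvalue of L̃_c, and these eigenvalues have the same geometric multiplicity. Moreover, v is an eigenvector of L̃ for λ iff x = (I − J/(1−λ))v is an eigenvector of P for λ and of L̃_c for 1−λ. -/
open Finset

/-- A standardized Laplacian matrix of order `n`: zero row sums and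
off-diagonal entries in `[−1/n, 0]`. -/
def IsStdLaplacian {n : ℕ} (L : Matrix (Fin n) (Fin n) ℝ) : Prop :=
  (∀ i, ∑ j, L i j = 0) ∧ ∀ i j, i ≠ j → -(1 / n) ≤ L i j ∧ L i j ≤ 0

/-- `μ` is an eigenvalue of the complex matrix `A`. -/
def IsEig {n : ℕ} (A : Matrix (Fin n) (Fin n) ℂ) (μ : ℂ) : Prop :=
  ∃ v : Fin n → ℂ, v ≠ 0 ∧ A.mulVec v = μ • v

/-- The geometric multiplicity of `μ` as an eigenvalue of `A`. -/
noncomputable def geomMult {n : ℕ} (A : Matrix (Fin n) (Fin n) ℂ) (μ : ℂ) : ℕ :=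
  Module.finrank ℂ (LinearMap.ker (A - μ • (1 : Matrix (Fin n) (Fin n) ℂ)).mulVecLin)

/-- For `λ ∉ {0,1}`: `λ ∈ sp L̃ ⟺ λ ∈ sp P ⟺ 1−λ ∈ sp L̃_c`, where
`P = L̃ + J` and `L̃_c = (I − J) − L̃`, with equal geometric multiplicities;
moreover `v` is an eigenvector of `L̃` for `λ` iff `x = (I − J/(1−λ)) v` is an
eigenvector of `P` for `λ` and of `L̃_c` for `1−λ`. -/
theorem std_laplacian_spectra {n : ℕ} (L : Matrix (Fin n) (Fin n) ℝ)
    (hL : IsStdLaplacian L) (lam : ℂ) (h0 : lam ≠ 0) (h1 : lam ≠ 1) :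
    let M : Matrix (Fin n) (Fin n) ℂ := L.map Complex.ofReal
    let Jc : Matrix (Fin n) (Fin n) ℂ := Matrix.of fun _ _ => (n : ℂ)⁻¹
    let P : Matrix (Fin n) (Fin n) ℂ := M + Jc
    let Lc : Matrix (Fin n) (Fin n) ℂ := ((1 : Matrix (Fin n) (Fin n) ℂ) - Jc) - M
    (IsEig M lam ↔ IsEig P lam) ∧ (IsEig M lam ↔ IsEig Lc (1 - lam)) ∧
    geomMult M lam = geomMult P lam ∧ geomMult M lam = geomMult Lc (1 - lam) ∧
    ∀ v : Fin n → ℂ,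
      ((v ≠ 0 ∧ M.mulVec v = lam • v) ↔
        (((1 : Matrix (Fin n) (Fin n) ℂ) - (1 - lam)⁻¹ • Jc).mulVec v ≠ 0 ∧
         P.mulVec  (((1 : Matrix (Fin n) (Fin n) ℂ) - (1 - lam)⁻¹ • Jc).mulVec v) =
           lam • (((1 : Matrix (Fin n) (Fin n) ℂ) - (1 - lam)⁻¹ • Jc).mulVec v) ∧
         Lc.mulVec (((1 : Matrix (Fin n) (Fin n) ℂ) - (1 - lam)⁻¹ • Jc).mulVec v) =
           (1 - lam) • (((1 : Matrix (Fin n) (Fin n) ℂ) - (1 - lam)⁻¹ • Jc).mulVec v))) := by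
  intro M Jc P Lc
  have h1' : (1 : ℂ) - lam ≠ 0 := sub_ne_zero.mpr (Ne.symm h1)
  set a : ℂ := (1 - lam)⁻¹ with ha_def
  have ha : (1 - lam) * a = 1 := mul_inv_cancel₀ h1'
  have hla : lam * a = a - 1 := by
    rw [ha_def]; field_simp; ring
  -- matrix identities
  have hMJ : M * Jc = 0 := by
    ext i j
    simp only [Matrix.mul_apply, Matrix.of_apply, Matrix.zero_apply, M, Jc,
      Matrix.map_apply]
    rw [← Finset.sum_mul]
    have : (∑ k, ((L i k : ℂ))) = 0 := by
      rw [← Complex.ofReal_sum, hL.1 i, Complex.ofReal_zero]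
    rw [this, zero_mul]
  have hJJ : Jc * Jc = Jc := by
    ext i j
    have hn : (n : ℂ) ≠ 0 := Nat.cast_ne_zero.mpr i.pos.ne'
    simp only [Matrix.mul_apply, Matrix.of_apply, Jc, Finset.sum_const, card_univ,
      Fintype.card_fin, nsmul_eq_mul]
    field_simp
  set Tm : Matrix (Fin n) (Fin n) ℂ := (1 : Matrix (Fin n) (Fin n) ℂ) - a • Jc with hTm_def
  set Sm : Matrix (Fin n) (Fin n) ℂ := (1 : Matrix (Fin n) (Fin n) ℂ) - lam⁻¹ • Jc with hSm_def
  have hc : lam⁻¹ * a = lam⁻¹ + a := by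
    rw [ha_def]; field_simp; ring
  have hST : Sm * Tm = 1 := by
    rw [hSm_def, hTm_def]
    simp only [Matrix.mul_sub, Matrix.sub_mul, Matrix.one_mul, Matrix.mul_one,
      Matrix.smul_mul, Matrix.mul_smul, smul_smul, hJJ]
    match_scalars <;> first | ring1 | linear_combination ha | linear_combination -ha | (field_simp; first | ring1 | linear_combination ha | linear_combination -ha)
  have hTS : Tm * Sm = 1 := by
    rw [hSm_def, hTm_def]
    simp only [Matrix.mul_sub, Matrix.sub_mul, Matrix.one_mul, Matrix.mul_one,
      Matrix.smul_mul, Matrix.mul_smul, smul_smul, hJJ]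
    match_scalars <;> first | ring1 | linear_combination ha | linear_combination -ha | (field_simp; first | ring1 | linear_combination ha | linear_combination -ha)
  have hTv : ∀ v : Fin n → ℂ, Tm.mulVec v = v - a • Jc.mulVec v := by
    intro v
    rw [hTm_def, Matrix.sub_mulVec, Matrix.smul_mulVec, Matrix.one_mulVec]
  have hMJv : ∀ v : Fin n → ℂ, M.mulVec (Jc.mulVec v) = 0 := by
    intro v; rw [Matrix.mulVec_mulVec, hMJ, Matrix.zero_mulVec]
  have hJJv : ∀ v : Fin n → ℂ, Jc.mulVec (Jc.mulVec v) = Jc.mulVec v := by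
    intro v; rw [Matrix.mulVec_mulVec, hJJ]
  have hPkey : ∀ v : Fin n → ℂ,
      P.mulVec (Tm.mulVec v) - lam • Tm.mulVec v = M.mulVec v - lam • v := by
    intro v
    rw [hTv]
    show (M + Jc).mulVec _ - _ = _
    rw [Matrix.add_mulVec, Matrix.mulVec_sub, Matrix.mulVec_sub,
      Matrix.mulVec_smul, Matrix.mulVec_smul, hMJv, hJJv]
    match_scalars <;> first | ring1 | linear_combination ha | linear_combination -ha | (field_simp; first | ring1 | linear_combination ha | linear_combination -ha)
  have hLkey : ∀ v : Fin n → ℂ,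
      Lc.mulVec (Tm.mulVec v) - (1 - lam) • Tm.mulVec v = -(M.mulVec v - lam • v) := by
    intro v
    rw [hTv]
    show ((1 : Matrix (Fin n) (Fin n) ℂ) - Jc - M).mulVec _ - _ = _
    rw [Matrix.sub_mulVec, Matrix.sub_mulVec, Matrix.one_mulVec, Matrix.mulVec_sub,
      Matrix.mulVec_sub, Matrix.mulVec_smul, Matrix.mulVec_smul, hMJv, hJJv]
    match_scalars <;> first | ring1 | linear_combination ha | linear_combination -ha | (field_simp; first | ring1 | linear_combination ha | linear_combination -ha)
  have hPiff : ∀ v : Fin n → ℂ,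
      (P.mulVec (Tm.mulVec v) = lam • Tm.mulVec v) ↔ M.mulVec v = lam • v := by
    intro v
    rw [← sub_eq_zero, hPkey, sub_eq_zero]
  have hLiff : ∀ v : Fin n → ℂ,
      (Lc.mulVec (Tm.mulVec v) = (1 - lam) • Tm.mulVec v) ↔ M.mulVec v = lam • v := by
    intro v
    rw [← sub_eq_zero, hLkey, neg_eq_zero, sub_eq_zero]
  have hTSv : ∀ x : Fin n → ℂ, Tm.mulVec (Sm.mulVec x) = x := by
    intro x; rw [Matrix.mulVec_mulVec, hTS, Matrix.one_mulVec]
  have hSTv : ∀ v : Fin n → ℂ, Sm.mulVec (Tm.mulVec v) = v := by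
    intro v; rw [Matrix.mulVec_mulVec, hST, Matrix.one_mulVec]
  have hTinj : ∀ v : Fin n → ℂ, Tm.mulVec v = 0 → v = 0 := by
    intro v hv
    have := congrArg Sm.mulVec hv
    rwa [hSTv, Matrix.mulVec_zero] at this
  have hsub : ∀ (A : Matrix (Fin n) (Fin n) ℂ) (μ : ℂ) (v : Fin n → ℂ),
      (A - μ • (1 : Matrix (Fin n) (Fin n) ℂ)).mulVecLin v = A.mulVec v - μ • v := by
    intro A μ v
    rw [Matrix.mulVecLin_apply, Matrix.sub_mulVec, Matrix.smul_mulVec,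
      Matrix.one_mulVec]
  have hinj : Function.Injective (Tm.mulVecLin) := by
    intro v w h
    have h' : Tm.mulVec v = Tm.mulVec w := h
    have := congrArg Sm.mulVec h'
    rwa [hSTv, hSTv] at this
  -- kernel maps
  have hmapP : LinearMap.ker (P - lam • (1 : Matrix (Fin n) (Fin n) ℂ)).mulVecLin =
      (LinearMap.ker (M - lam • (1 : Matrix (Fin n) (Fin n) ℂ)).mulVecLin).map
        Tm.mulVecLin := by
    ext x
    simp only [Submodule.mem_map, LinearMap.mem_ker, hsub, Matrix.mulVecLin_apply,
      sub_eq_zero]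
    constructor
    · intro hx
      refine ⟨Sm.mulVec x, (hPiff _).mp ?_, hTSv x⟩
      rw [hTSv]; exact hx
    · rintro ⟨v, hv, rfl⟩
      exact (hPiff v).mpr hv
  have hmapL : LinearMap.ker (Lc - (1 - lam) • (1 : Matrix (Fin n) (Fin n) ℂ)).mulVecLin =
      (LinearMap.ker (M - lam • (1 : Matrix (Fin n) (Fin n) ℂ)).mulVecLin).map
        Tm.mulVecLin := by
    ext x
    simp only [Submodule.mem_map, LinearMap.mem_ker, hsub, Matrix.mulVecLin_apply,
      sub_eq_zero]
    constructor
    · intro hx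
      refine ⟨Sm.mulVec x, (hLiff _).mp ?_, hTSv x⟩
      rw [hTSv]; exact hx
    · rintro ⟨v, hv, rfl⟩
      exact (hLiff v).mpr hv
  refine ⟨?_, ?_, ?_, ?_, ?_⟩
  · constructor
    · rintro ⟨v, hv0, hv⟩
      exact ⟨Tm.mulVec v, fun h => hv0 (hTinj v h), (hPiff v).mpr hv⟩
    · rintro ⟨x, hx0, hx⟩
      refine ⟨Sm.mulVec x, ?_, (hPiff _).mp ?_⟩
      · intro h
        apply hx0
        rw [← hTSv x, h, Matrix.mulVec_zero]
      · rw [hTSv]; exact hx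
  · constructor
    · rintro ⟨v, hv0, hv⟩
      exact ⟨Tm.mulVec v, fun h => hv0 (hTinj v h), (hLiff v).mpr hv⟩
    · rintro ⟨x, hx0, hx⟩
      refine ⟨Sm.mulVec x, ?_, (hLiff _).mp ?_⟩
      · intro h
        apply hx0
        rw [← hTSv x, h, Matrix.mulVec_zero]
      · rw [hTSv]; exact hx
  · unfold geomMult
    rw [hmapP]
    exact LinearEquiv.finrank_eq (Submodule.equivMapOfInjective _ hinj _)
  · unfold geomMult
    rw [hmapL]
    exact LinearEquiv.finrank_eq (Submodule.equivMapOfInjective _ hinj _)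
  · intro v
    constructor
    · rintro ⟨hv0, hv⟩
      exact ⟨fun h => hv0 (hTinj v h), (hPiff v).mpr hv, (hLiff v).mpr hv⟩
    · rintro ⟨hx0, hP, -⟩
      refine ⟨fun h => hx0 ?_, (hPiff v).mp hP⟩
      rw [h, Matrix.mulVec_zero]
end

section
/- Let h(n) = sup of Im(λ) over eigenvalues λ of all standardized Laplacian matrices of order n. Then lim_{n→∞} h(n) = 1/π. -/
open Finset

/-- `h(n)`: the supremum of imaginary parts of eigenvalues of standardized
Laplacian matrices of order `n`. -/
noncomputable def hSup (n : ℕ) : ℝ :=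
  sSup {y : ℝ | ∃ L : Matrix (Fin n) (Fin n) ℝ, IsStdLaplacian L ∧
    ∃ (lam : ℂ) (v : Fin n → ℂ), v ≠ 0 ∧
      (L.map Complex.ofReal).mulVec v = lam • v ∧ y = lam.im}

open Real MeasureTheory intervalIntegral

noncomputable def Hfun (s u : ℝ) : ℝ := if Int.fract (u / Real.pi) * Real.pi < s then 1 else 0

lemma Hfun_periodic (s : ℝ) : Function.Periodic (Hfun s) Real.pi := by
  intro u
  unfold Hfun
  rw [add_div, div_self Real.pi_ne_zero, Int.fract_add_one]

lemma Hfun_measurable (s : ℝ) : Measurable (Hfun s) := by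
  unfold Hfun
  apply Measurable.ite _ measurable_const measurable_const
  exact measurableSet_lt (((measurable_id.div_const _).fract).mul_const _) measurable_const

lemma Hfun_nonneg (s u : ℝ) : 0 ≤ Hfun s u := by unfold Hfun; positivity

lemma Hfun_le_one (s u : ℝ) : Hfun s u ≤ 1 := by
  unfold Hfun; split <;> norm_num

lemma Hfun_intble (s a b : ℝ) : IntervalIntegrable (Hfun s) volume a b := by
  apply (_root_.intervalIntegrable_const (c := (1:ℝ))).mono_fun'
    (Hfun_measurable s).aestronglyMeasurable
  filter_upwards with x
  rw [Real.norm_eq_abs, abs_of_nonneg (Hfun_nonneg s x)]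
  exact Hfun_le_one s x

lemma Hfun_eq_on (s : ℝ) {u : ℝ} (h0 : 0 ≤ u) (h1 : u < Real.pi) :
    Hfun s u = if u < s then 1 else 0 := by
  unfold Hfun
  rw [Int.fract_eq_self.2 ⟨by positivity, by rwa [div_lt_one Real.pi_pos]⟩,
    div_mul_cancel₀ _ Real.pi_ne_zero]

lemma ae_ne_pt (b : ℝ) : ∀ᵐ x : ℝ, x ≠ b := by
  have h : (volume : Measure ℝ) {b} = 0 := Real.volume_singleton
  have := MeasureTheory.measure_eq_zero_iff_ae_notMem.mp h
  simpa using this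

lemma integral_eq_const_of_Ioo {f : ℝ → ℝ} {a b c : ℝ} (hab : a ≤ b)
    (h : ∀ u ∈ Set.Ioo a b, f u = c) : ∫ u in a..b, f u = (b - a) * c := by
  have : ∫ u in a..b, f u = ∫ _ in a..b, c := by
    apply intervalIntegral.integral_congr_ae
    filter_upwards [ae_ne_pt b] with x hx hmem
    rw [Set.uIoc_of_le hab] at hmem
    exact h x ⟨hmem.1, lt_of_le_of_ne hmem.2 hx⟩
  rw [this, intervalIntegral.integral_const, smul_eq_mul]

lemma K1 (s : ℝ) (hs0 : 0 ≤ s) (hs : s ≤ Real.pi) (a : ℝ) :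
    ∫ t in (0:ℝ)..Real.pi, Hfun s (a - t) = s := by
  have h1 : ∫ t in (0:ℝ)..Real.pi, Hfun s (a - t) = ∫ u in a - Real.pi..a, Hfun s u := by
    simpa using intervalIntegral.integral_comp_sub_left (Hfun s) a (a := 0) (b := Real.pi)
  have h2 : ∫ u in a - Real.pi..a, Hfun s u = ∫ u in (0:ℝ)..Real.pi, Hfun s u := by
    have := (Hfun_periodic s).intervalIntegral_add_eq (a - Real.pi) 0
    simpa using this
  have h3 : ∫ u in (0:ℝ)..s, Hfun s u = (s - 0) * 1 := by
    apply integral_eq_const_of_Ioo hs0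
    intro u hu
    rw [Hfun_eq_on s hu.1.le (lt_of_lt_of_le hu.2 hs), if_pos hu.2]
  have h4 : ∫ u in s..Real.pi, Hfun s u = (Real.pi - s) * 0 := by
    apply integral_eq_const_of_Ioo hs
    intro u hu
    rw [Hfun_eq_on s (hs0.trans hu.1.le) hu.2, if_neg (not_lt.2 hu.1.le)]
  have h5 := intervalIntegral.integral_add_adjacent_intervals
    (Hfun_intble s 0 s) (Hfun_intble s s Real.pi)
  rw [h1, h2, ← h5, h3, h4]; ring

lemma Hfun_eq_on_neg (s : ℝ) {u : ℝ} (h0 : -Real.pi < u) (h1 : u < 0) :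
    Hfun s u = if u + Real.pi < s then 1 else 0 := by
  rw [← Hfun_periodic s u]
  exact Hfun_eq_on s (by linarith) (by linarith)

lemma abs_sin_eq (x : ℝ) :
    |Real.sin x| = Real.sin (Int.fract (x / Real.pi) * Real.pi) := by
  set y : ℝ := Int.fract (x / Real.pi) * Real.pi with hy
  have hx : x = y + (⌊x / Real.pi⌋ : ℤ) * Real.pi := by
    rw [hy, Int.fract]; field_simp; ring
  have hy0 : 0 ≤ y := mul_nonneg (Int.fract_nonneg _) Real.pi_pos.le
  have hy1 : y ≤ Real.pi := by
    have := (Int.fract_lt_one (x / Real.pi)).le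
    calc y ≤ 1 * Real.pi := by rw [hy]; nlinarith [Real.pi_pos]
    _ = Real.pi := one_mul _
  rw [hx, Real.sin_add_int_mul_pi, abs_mul]
  have h2 : |((-1:ℝ)) ^ (⌊x / Real.pi⌋ : ℤ)| = 1 := by
    rcases Int.even_or_odd ⌊x / Real.pi⌋ with h | h
    · rw [h.neg_one_zpow, abs_one]
    · rw [Odd.neg_one_zpow h, abs_neg, abs_one]
  rw [h2, one_mul, abs_of_nonneg (Real.sin_nonneg_of_nonneg_of_le_pi hy0 hy1)]

lemma Hprod_intble (s x a b : ℝ) :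
    IntervalIntegrable (fun u => Hfun s u * Hfun s (u - x)) volume a b := by
  have hm : Measurable fun u : ℝ => Hfun s u * Hfun s (u - x) :=
    (Hfun_measurable s).mul ((Hfun_measurable s).comp (measurable_id.sub_const x))
  apply (_root_.intervalIntegrable_const (c := (1:ℝ))).mono_fun' hm.aestronglyMeasurable
  filter_upwards with u
  rw [Real.norm_eq_abs, abs_of_nonneg (mul_nonneg (Hfun_nonneg _ _) (Hfun_nonneg _ _))]
  calc Hfun s u * Hfun s (u - x) ≤ 1 * 1 :=
    mul_le_mul (Hfun_le_one _ _) (Hfun_le_one _ _) (Hfun_nonneg _ _) zero_le_one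
  _ = 1 := one_mul _

lemma Hfun_overlap (s : ℝ) (hs0 : 0 ≤ s) (hs : s ≤ Real.pi / 2) (x : ℝ) :
    ∫ u in (0:ℝ)..Real.pi, Hfun s u * Hfun s (u - x) =
      max (s - Int.fract (x / Real.pi) * Real.pi) 0 +
      max (s - (Real.pi - Int.fract (x / Real.pi) * Real.pi)) 0 := by
  have hpi := Real.pi_pos
  set y : ℝ := Int.fract (x / Real.pi) * Real.pi with hy
  have hy0 : 0 ≤ y := mul_nonneg (Int.fract_nonneg _) hpi.le
  have hy1 : y < Real.pi := by
    have := Int.fract_lt_one (x / Real.pi)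
    rw [hy]; nlinarith
  -- replace x by y
  have hxy : ∀ u : ℝ, Hfun s (u - x) = Hfun s (u - y) := by
    intro u
    have h : u - x = u - y - (⌊x / Real.pi⌋ : ℤ) * Real.pi := by
      rw [hy, Int.fract]; field_simp; ring
    rw [h, (Hfun_periodic s).sub_int_mul_eq]
  simp_rw [hxy]
  rcases le_or_gt y s with hc1 | hc1
  · -- case y ≤ s : pieces [0,y],[y,s],[s,π]
    have p1 : ∫ u in (0:ℝ)..y, Hfun s u * Hfun s (u - y) = (y - 0) * 0 := by
      apply integral_eq_const_of_Ioo hy0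
      intro u hu; obtain ⟨hu1, hu2⟩ := hu
      rw [Hfun_eq_on_neg s (u := u - y) (by linarith) (by linarith),
        if_neg (by push_neg; linarith), mul_zero]
    have p2 : ∫ u in y..s, Hfun s u * Hfun s (u - y) = (s - y) * 1 := by
      apply integral_eq_const_of_Ioo hc1
      intro u hu; obtain ⟨hu1, hu2⟩ := hu
      rw [Hfun_eq_on s (u := u) (by linarith) (by linarith), if_pos (by linarith),
        Hfun_eq_on s (u := u - y) (by linarith) (by linarith), if_pos (by linarith), one_mul]
    have p3 : ∫ u in s..Real.pi, Hfun s u * Hfun s (u - y) = (Real.pi - s) * 0 := by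
      apply integral_eq_const_of_Ioo (by linarith)
      intro u hu; obtain ⟨hu1, hu2⟩ := hu
      rw [Hfun_eq_on s (u := u) (by linarith) (by linarith),
        if_neg (by push_neg; linarith), zero_mul]
    rw [← intervalIntegral.integral_add_adjacent_intervals (a := (0:ℝ)) (b := y) (c := Real.pi)
        (Hprod_intble s y 0 y) (Hprod_intble s y y Real.pi),
      ← intervalIntegral.integral_add_adjacent_intervals (a := y) (b := s) (c := Real.pi)
        (Hprod_intble s y y s) (Hprod_intble s y s Real.pi), p1, p2, p3,
      max_eq_left (by linarith), max_eq_right (by linarith)]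
    ring
  · rcases le_or_gt y (Real.pi - s) with hc2 | hc2
    · -- case s < y ≤ π - s : zero
      have p1 : ∫ u in (0:ℝ)..y, Hfun s u * Hfun s (u - y) = (y - 0) * 0 := by
        apply integral_eq_const_of_Ioo hy0
        intro u hu; obtain ⟨hu1, hu2⟩ := hu
        rcases lt_or_ge u s with h | h
        · rw [Hfun_eq_on_neg s (u := u - y) (by linarith) (by linarith),
            if_neg (by push_neg; linarith), mul_zero]
        · rw [Hfun_eq_on s (u := u) (by linarith) (by linarith),
            if_neg (by push_neg; linarith), zero_mul]
      have p2 : ∫ u in y..Real.pi, Hfun s u * Hfun s (u - y) = (Real.pi - y) * 0 := by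
        apply integral_eq_const_of_Ioo hy1.le
        intro u hu; obtain ⟨hu1, hu2⟩ := hu
        rw [Hfun_eq_on s (u := u) (by linarith) (by linarith),
          if_neg (by push_neg; linarith), zero_mul]
      rw [← intervalIntegral.integral_add_adjacent_intervals (a := (0:ℝ)) (b := y) (c := Real.pi)
          (Hprod_intble s y 0 y) (Hprod_intble s y y Real.pi), p1, p2,
        max_eq_right (by linarith), max_eq_right (by linarith)]
      ring
    · -- case π - s < y : pieces [0, s+y-π], [s+y-π, y], [y, π]
      have p1 : ∫ u in (0:ℝ)..(s + y - Real.pi), Hfun s u * Hfun s (u - y) =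
          (s + y - Real.pi - 0) * 1 := by
        apply integral_eq_const_of_Ioo (by linarith)
        intro u hu; obtain ⟨hu1, hu2⟩ := hu
        rw [Hfun_eq_on s (u := u) (by linarith) (by linarith), if_pos (by linarith),
          Hfun_eq_on_neg s (u := u - y) (by linarith) (by linarith),
          if_pos (by linarith), one_mul]
      have p2 : ∫ u in (s + y - Real.pi)..y, Hfun s u * Hfun s (u - y) =
          (y - (s + y - Real.pi)) * 0 := by
        apply integral_eq_const_of_Ioo (by linarith)
        intro u hu; obtain ⟨hu1, hu2⟩ := hu
        rcases lt_or_ge u s with h | h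
        · rw [Hfun_eq_on_neg s (u := u - y) (by linarith) (by linarith),
            if_neg (by push_neg; linarith), mul_zero]
        · rw [Hfun_eq_on s (u := u) (by linarith) (by linarith),
            if_neg (by push_neg; linarith), zero_mul]
      have p3 : ∫ u in y..Real.pi, Hfun s u * Hfun s (u - y) = (Real.pi - y) * 0 := by
        apply integral_eq_const_of_Ioo hy1.le
        intro u hu; obtain ⟨hu1, hu2⟩ := hu
        rw [Hfun_eq_on s (u := u) (by linarith) (by linarith),
          if_neg (by push_neg; linarith), zero_mul]
      rw [← intervalIntegral.integral_add_adjacent_intervals (a := (0:ℝ))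
          (b := s + y - Real.pi) (c := Real.pi)
          (Hprod_intble s y 0 _) (Hprod_intble s y _ Real.pi),
        ← intervalIntegral.integral_add_adjacent_intervals (a := s + y - Real.pi) (b := y)
          (c := Real.pi) (Hprod_intble s y _ y) (Hprod_intble s y y Real.pi), p1, p2, p3,
        max_eq_right (by linarith), max_eq_left (by linarith)]
      ring

lemma Hcomp_intble (s a : ℝ) :
    IntervalIntegrable (fun t => Hfun s (a - t)) volume 0 Real.pi := by
  have h := (Hfun_intble s a (a - Real.pi)).comp_sub_left a
  simpa using h

lemma Hprodcomp_intble (s a b : ℝ) :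
    IntervalIntegrable (fun t => Hfun s (a - t) * Hfun s (b - t)) volume 0 Real.pi := by
  have h := (Hprod_intble s (a - b) a (a - Real.pi)).comp_sub_left a
  simp only [sub_self, sub_sub_cancel] at h
  have e : ∀ t : ℝ, a - t - (a - b) = b - t := fun t => by ring
  simpa [e] using h

lemma K3 (s : ℝ) (hs0 : 0 ≤ s) (hs : s ≤ Real.pi / 2) (a b : ℝ) :
    ∫ t in (0:ℝ)..Real.pi, (Hfun s (a - t) - s / Real.pi) * (Hfun s (b - t) - s / Real.pi) =
      max (s - Int.fract ((a - b) / Real.pi) * Real.pi) 0 +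
      max (s - (Real.pi - Int.fract ((a - b) / Real.pi) * Real.pi)) 0 - s ^ 2 / Real.pi := by
  have hpi := Real.pi_pos
  set c : ℝ := s / Real.pi with hc
  have e : ∀ t : ℝ, (Hfun s (a - t) - c) * (Hfun s (b - t) - c) =
      Hfun s (a - t) * Hfun s (b - t) - c * Hfun s (a - t) - c * Hfun s (b - t) + c * c :=
    fun t => by ring
  simp_rw [e]
  have iAB := Hprodcomp_intble s a b
  have iA := Hcomp_intble s a
  have iB := Hcomp_intble s b
  rw [intervalIntegral.integral_add (((iAB.sub (iA.const_mul c))).sub (iB.const_mul c))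
      (intervalIntegrable_const),
    intervalIntegral.integral_sub ((iAB.sub (iA.const_mul c))) (iB.const_mul c),
    intervalIntegral.integral_sub iAB (iA.const_mul c),
    intervalIntegral.integral_const_mul, intervalIntegral.integral_const_mul,
    intervalIntegral.integral_const]
  have hAB : ∫ t in (0:ℝ)..Real.pi, Hfun s (a - t) * Hfun s (b - t) =
      max (s - Int.fract ((a - b) / Real.pi) * Real.pi) 0 +
      max (s - (Real.pi - Int.fract ((a - b) / Real.pi) * Real.pi)) 0 := by
    have e2 : ∀ t : ℝ, Hfun s (a - t) * Hfun s (b - t) =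
        Hfun s (a - t) * Hfun s ((a - t) - (a - b)) := fun t => by
      congr 2; ring
    simp_rw [e2]
    have h1 : ∫ t in (0:ℝ)..Real.pi,
        Hfun s (a - t) * Hfun s ((a - t) - (a - b)) =
        ∫ u in a - Real.pi..a, Hfun s u * Hfun s (u - (a - b)) := by
      simpa using intervalIntegral.integral_comp_sub_left
        (fun u => Hfun s u * Hfun s (u - (a - b))) a (a := 0) (b := Real.pi)
    have hper : Function.Periodic (fun u => Hfun s u * Hfun s (u - (a - b))) Real.pi := by
      intro u
      simp only
      rw [Hfun_periodic s u]
      congr 1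
      have : u + Real.pi - (a - b) = (u - (a - b)) + Real.pi := by ring
      rw [this, Hfun_periodic s]
    have h2 := hper.intervalIntegral_add_eq (a - Real.pi) 0
    simp only [sub_add_cancel, zero_add] at h2
    rw [h1, h2, Hfun_overlap s hs0 hs (a - b)]
  rw [hAB, K1 s hs0 (by linarith) a, K1 s hs0 (by linarith) b]
  rw [hc]
  field_simp
  ring_nf
  field_simp
  ring

lemma J2 : ∫ s in (0:ℝ)..(Real.pi/2), s ^ 2 * Real.sin s = Real.pi - 2 := by
  have h : ∀ u ∈ Set.uIcc (0:ℝ) (Real.pi/2),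
      HasDerivAt (fun z : ℝ => -(z ^ 2) * Real.cos z + 2 * (z * Real.sin z) + 2 * Real.cos z)
        (u ^ 2 * Real.sin u) u := by
    intro u _
    have h1 : HasDerivAt (fun z : ℝ => -(z ^ 2) * Real.cos z)
        (-(2 * u ^ 1) * Real.cos u + -(u ^ 2) * -Real.sin u) u :=
      ((hasDerivAt_pow 2 u).fun_neg).fun_mul (Real.hasDerivAt_cos u)
    have h2 : HasDerivAt (fun z : ℝ => z * Real.sin z)
        (1 * Real.sin u + u * Real.cos u) u :=
      (hasDerivAt_id u).fun_mul (Real.hasDerivAt_sin u)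
    have h3 := (h1.fun_add ((h2.const_mul 2))).fun_add ((Real.hasDerivAt_cos u).const_mul 2)
    refine h3.congr_deriv ?_
    ring
  have hi : IntervalIntegrable (fun u : ℝ => u ^ 2 * Real.sin u) volume 0 (Real.pi/2) :=
    ((continuous_pow 2).mul Real.continuous_sin).intervalIntegrable _ _
  rw [intervalIntegral.integral_eq_sub_of_hasDerivAt h hi]
  simp [Real.cos_pi_div_two, Real.sin_pi_div_two]
  ring

lemma J1 (d : ℝ) (hd0 : 0 ≤ d) (hd : d ≤ Real.pi / 2) :
    ∫ s in (0:ℝ)..(Real.pi/2), max (s - d) 0 * Real.sin s = 1 - Real.sin d := by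
  have hi : ∀ a b : ℝ, IntervalIntegrable (fun s => max (s - d) 0 * Real.sin s) volume a b :=
    fun a b => (((continuous_id.sub continuous_const).max continuous_const).mul
      Real.continuous_sin).intervalIntegrable _ _
  rw [← intervalIntegral.integral_add_adjacent_intervals (a := (0:ℝ)) (b := d)
    (c := Real.pi/2) (hi 0 d) (hi d _)]
  have p1 : ∫ s in (0:ℝ)..d, max (s - d) 0 * Real.sin s = 0 := by
    have : ∀ s ∈ Set.uIcc (0:ℝ) d, max (s - d) 0 * Real.sin s = 0 := by
      intro s hs
      rw [Set.uIcc_of_le hd0] at hs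
      rw [max_eq_right (by linarith [hs.2]), zero_mul]
    rw [intervalIntegral.integral_congr this, intervalIntegral.integral_zero]
  have p2 : ∫ s in d..(Real.pi/2), max (s - d) 0 * Real.sin s = 1 - Real.sin d := by
    have e : ∀ s ∈ Set.uIcc d (Real.pi/2), max (s - d) 0 * Real.sin s =
        (s - d) * Real.sin s := by
      intro s hs
      rw [Set.uIcc_of_le hd] at hs
      rw [max_eq_left (by linarith [hs.1])]
    rw [intervalIntegral.integral_congr e]
    have h : ∀ u ∈ Set.uIcc d (Real.pi/2),
        HasDerivAt (fun z : ℝ => -((z - d) * Real.cos z) + Real.sin z)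
          ((u - d) * Real.sin u) u := by
      intro u _
      have h1 : HasDerivAt (fun z : ℝ => (z - d) * Real.cos z)
          (1 * Real.cos u + (u - d) * -Real.sin u) u := by
        simpa using ((hasDerivAt_id u).sub_const d).fun_mul (Real.hasDerivAt_cos u)
      have h3 := h1.fun_neg.fun_add (Real.hasDerivAt_sin u)
      refine h3.congr_deriv ?_
      ring
    rw [intervalIntegral.integral_eq_sub_of_hasDerivAt h
      (((continuous_id.sub continuous_const).mul Real.continuous_sin).intervalIntegrable _ _)]
    simp [Real.cos_pi_div_two, Real.sin_pi_div_two]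
  rw [p1, p2, zero_add]

lemma K4 (x : ℝ) :
    ∫ s in (0:ℝ)..(Real.pi/2),
      (max (s - Int.fract (x / Real.pi) * Real.pi) 0 +
       max (s - (Real.pi - Int.fract (x / Real.pi) * Real.pi)) 0 - s ^ 2 / Real.pi) *
        Real.sin s = 2 / Real.pi - |Real.sin x| := by
  have hpi := Real.pi_pos
  set y : ℝ := Int.fract (x / Real.pi) * Real.pi with hy
  have hy0 : 0 ≤ y := mul_nonneg (Int.fract_nonneg _) hpi.le
  have hy1 : y < Real.pi := by
    have := Int.fract_lt_one (x / Real.pi)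
    rw [hy]; nlinarith
  have hiM : ∀ d : ℝ, IntervalIntegrable (fun s => max (s - d) 0 * Real.sin s) volume 0 (Real.pi/2) :=
    fun d => (((continuous_id.sub continuous_const).max continuous_const).mul
      Real.continuous_sin).intervalIntegrable _ _
  have hiS : IntervalIntegrable (fun s : ℝ => s ^ 2 / Real.pi * Real.sin s) volume 0 (Real.pi/2) :=
    (((continuous_pow 2).div_const _).mul Real.continuous_sin).intervalIntegrable _ _
  have e : ∀ s : ℝ, (max (s - y) 0 + max (s - (Real.pi - y)) 0 - s ^ 2 / Real.pi) * Real.sin s =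
      max (s - y) 0 * Real.sin s + max (s - (Real.pi - y)) 0 * Real.sin s -
        s ^ 2 / Real.pi * Real.sin s := fun s => by ring
  simp_rw [e]
  rw [intervalIntegral.integral_sub ((hiM y).add (hiM _)) hiS,
    intervalIntegral.integral_add (hiM y) (hiM _)]
  have hS : ∫ s in (0:ℝ)..(Real.pi/2), s ^ 2 / Real.pi * Real.sin s = (Real.pi - 2) / Real.pi := by
    have e2 : ∀ s : ℝ, s ^ 2 / Real.pi * Real.sin s = (1 / Real.pi) * (s ^ 2 * Real.sin s) :=
      fun s => by ring
    simp_rw [e2]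
    rw [intervalIntegral.integral_const_mul, J2]
    ring
  have habs : |Real.sin x| = Real.sin y := abs_sin_eq x
  rcases le_or_gt y (Real.pi / 2) with hc | hc
  · have hz : ∫ s in (0:ℝ)..(Real.pi/2), max (s - (Real.pi - y)) 0 * Real.sin s = 0 := by
      have : ∀ s ∈ Set.uIcc (0:ℝ) (Real.pi/2), max (s - (Real.pi - y)) 0 * Real.sin s = 0 := by
        intro s hs
        rw [Set.uIcc_of_le (by linarith)] at hs
        rw [max_eq_right (by linarith [hs.2]), zero_mul]
      rw [intervalIntegral.integral_congr this, intervalIntegral.integral_zero]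
    rw [hz, J1 y hy0 hc, hS, habs]
    field_simp
    ring
  · have hz : ∫ s in (0:ℝ)..(Real.pi/2), max (s - y) 0 * Real.sin s = 0 := by
      have : ∀ s ∈ Set.uIcc (0:ℝ) (Real.pi/2), max (s - y) 0 * Real.sin s = 0 := by
        intro s hs
        rw [Set.uIcc_of_le (by linarith)] at hs
        rw [max_eq_right (by linarith [hs.2]), zero_mul]
      rw [intervalIntegral.integral_congr this, intervalIntegral.integral_zero]
    rw [hz, J1 (Real.pi - y) (by linarith) (by linarith), hS, habs, Real.sin_pi_sub]
    field_simp
    ring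

lemma g_intble (s c a b : ℝ) :
    IntervalIntegrable (fun t => (Hfun s (a - t) - c) * (Hfun s (b - t) - c))
      volume 0 Real.pi := by
  have e : (fun t : ℝ => (Hfun s (a - t) - c) * (Hfun s (b - t) - c)) =
      fun t => Hfun s (a - t) * Hfun s (b - t) - c * Hfun s (a - t) - c * Hfun s (b - t)
        + c * c := funext fun t => by ring
  rw [e]
  exact (((Hprodcomp_intble s a b).sub ((Hcomp_intble s a).const_mul c)).sub
    ((Hcomp_intble s b).const_mul c)).add intervalIntegrable_const

noncomputable def mker (a s : ℝ) : ℝ :=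
  max (s - Int.fract (a / Real.pi) * Real.pi) 0 +
  max (s - (Real.pi - Int.fract (a / Real.pi) * Real.pi)) 0 - s ^ 2 / Real.pi

lemma mker_cont (a : ℝ) : Continuous (mker a) := by
  unfold mker
  apply Continuous.sub
  · exact ((continuous_id.sub continuous_const).max continuous_const).add
      ((continuous_id.sub continuous_const).max continuous_const)
  · exact (continuous_pow 2).div_const _

lemma K3' (s : ℝ) (hs0 : 0 ≤ s) (hs : s ≤ Real.pi / 2) (a b : ℝ) :
    ∫ t in (0:ℝ)..Real.pi, (Hfun s (a - t) - s / Real.pi) * (Hfun s (b - t) - s / Real.pi) =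
      mker (a - b) s := K3 s hs0 hs a b

lemma K4' (x : ℝ) :
    ∫ s in (0:ℝ)..(Real.pi/2), mker x s * Real.sin s = 2 / Real.pi - |Real.sin x| := by
  have := K4 x
  unfold mker
  convert this using 2

set_option maxHeartbeats 1000000 in
/-- The matrix `[2/π - |sin(θ i - θ j)|]` has nonnegative quadratic form on nonneg vectors. -/
lemma kernel_ineq {n : ℕ} (r θ : Fin n → ℝ) (hr : ∀ i, 0 ≤ r i) :
    ∑ i, ∑ j, r i * r j * |Real.sin (θ i - θ j)| ≤ (2 / Real.pi) * (∑ i, r i) ^ 2 := by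
  have hpi := Real.pi_pos
  -- pointwise nonnegativity of the quadratic form of mker
  have hQ : ∀ s, 0 ≤ s → s ≤ Real.pi / 2 → 0 ≤ ∑ i, ∑ j, r i * r j * mker (θ i - θ j) s := by
    intro s hs0 hs1
    have hrw : ∀ i j : Fin n, r i * r j * mker (θ i - θ j) s =
        ∫ t in (0:ℝ)..Real.pi, r i * r j *
          ((Hfun s (θ i - t) - s / Real.pi) * (Hfun s (θ j - t) - s / Real.pi)) := by
      intro i j
      rw [intervalIntegral.integral_const_mul, K3' s hs0 hs1]
    have hpt : ∀ t : ℝ, (∑ i, r i * (Hfun s (θ i - t) - s / Real.pi)) ^ 2 =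
        ∑ i, ∑ j, r i * r j *
          ((Hfun s (θ i - t) - s / Real.pi) * (Hfun s (θ j - t) - s / Real.pi)) := by
      intro t
      rw [sq, Finset.sum_mul_sum]
      exact Finset.sum_congr rfl fun i _ => Finset.sum_congr rfl fun j _ => by ring
    calc (0:ℝ) ≤ ∫ t in (0:ℝ)..Real.pi,
        (∑ i, r i * (Hfun s (θ i - t) - s / Real.pi)) ^ 2 := by
          apply intervalIntegral.integral_nonneg hpi.le
          intro t _
          positivity
    _ = ∫ t in (0:ℝ)..Real.pi, ∑ i, ∑ j, r i * r j *
          ((Hfun s (θ i - t) - s / Real.pi) * (Hfun s (θ j - t) - s / Real.pi)) := by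
          exact intervalIntegral.integral_congr fun t _ => hpt t
    _ = ∑ i, ∫ t in (0:ℝ)..Real.pi, ∑ j, r i * r j *
          ((Hfun s (θ i - t) - s / Real.pi) * (Hfun s (θ j - t) - s / Real.pi)) :=
          intervalIntegral.integral_finset_sum
            (f := fun i t => ∑ j, r i * r j *
              ((Hfun s (θ i - t) - s / Real.pi) * (Hfun s (θ j - t) - s / Real.pi)))
            (fun i _ => by
              have h := IntervalIntegrable.sum Finset.univ
                (f := fun j t => r i * r j *
                  ((Hfun s (θ i - t) - s / Real.pi) * (Hfun s (θ j - t) - s / Real.pi)))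
                fun j _ => (g_intble s (s / Real.pi) (θ i) (θ j)).const_mul (r i * r j)
              have e2 : (∑ j : Fin n, fun t => r i * r j *
                  ((Hfun s (θ i - t) - s / Real.pi) * (Hfun s (θ j - t) - s / Real.pi)))
                  = fun t => ∑ j, r i * r j *
                  ((Hfun s (θ i - t) - s / Real.pi) * (Hfun s (θ j - t) - s / Real.pi)) :=
                funext fun t => by simp
              rw [e2] at h
              exact h)
    _ = ∑ i, ∑ j, ∫ t in (0:ℝ)..Real.pi, r i * r j *
          ((Hfun s (θ i - t) - s / Real.pi) * (Hfun s (θ j - t) - s / Real.pi)) :=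
          by
          apply Finset.sum_congr rfl
          intro i _
          exact intervalIntegral.integral_finset_sum
            (f := fun j t => r i * r j *
              ((Hfun s (θ i - t) - s / Real.pi) * (Hfun s (θ j - t) - s / Real.pi)))
            (fun j _ => (g_intble s (s / Real.pi) (θ i) (θ j)).const_mul _)
    _ = ∑ i, ∑ j, r i * r j * mker (θ i - θ j) s :=
          Finset.sum_congr rfl fun i _ => Finset.sum_congr rfl fun j _ => (hrw i j).symm
  -- the key identity via K4
  have key : ∑ i, ∑ j, r i * r j * (2 / Real.pi - |Real.sin (θ i - θ j)|) =
      ∫ s in (0:ℝ)..(Real.pi/2), (∑ i, ∑ j, r i * r j * mker (θ i - θ j) s) * Real.sin s := by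
    have e : ∀ s : ℝ, (∑ i, ∑ j, r i * r j * mker (θ i - θ j) s) * Real.sin s =
        ∑ i, ∑ j, r i * r j * (mker (θ i - θ j) s * Real.sin s) := by
      intro s
      rw [Finset.sum_mul]
      exact Finset.sum_congr rfl fun i _ => by
        rw [Finset.sum_mul]
        exact Finset.sum_congr rfl fun j _ => by ring
    rw [intervalIntegral.integral_congr (fun s _ => e s)]
    rw [intervalIntegral.integral_finset_sum
        (f := fun i s => ∑ j, r i * r j * (mker (θ i - θ j) s * Real.sin s))
        (fun i _ => by
          have h := IntervalIntegrable.sum (μ := volume) (a := 0) (b := Real.pi/2) Finset.univ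
            (f := fun j s => r i * r j * (mker (θ i - θ j) s * Real.sin s))
            fun j _ =>
              (((mker_cont _).mul Real.continuous_sin).intervalIntegrable 0
                (Real.pi/2)).const_mul (r i * r j)
          have e2 : (∑ j : Fin n, fun s => r i * r j * (mker (θ i - θ j) s * Real.sin s))
              = fun s => ∑ j, r i * r j * (mker (θ i - θ j) s * Real.sin s) :=
            funext fun s => by simp
          rw [e2] at h
          exact h)]
    apply Finset.sum_congr rfl
    intro i _
    rw [intervalIntegral.integral_finset_sum
      (f := fun j s => r i * r j * (mker (θ i - θ j) s * Real.sin s))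
      (fun j _ => (((mker_cont _).mul Real.continuous_sin).intervalIntegrable _ _).const_mul _)]
    apply Finset.sum_congr rfl
    intro j _
    rw [intervalIntegral.integral_const_mul, K4' (θ i - θ j)]
  have hnn : 0 ≤ ∑ i, ∑ j, r i * r j * (2 / Real.pi - |Real.sin (θ i - θ j)|) := by
    rw [key]
    apply intervalIntegral.integral_nonneg (by linarith)
    intro s hs
    exact mul_nonneg (hQ s hs.1 hs.2) (Real.sin_nonneg_of_nonneg_of_le_pi hs.1 (by linarith [hs.2]))
  have expand : ∑ i, ∑ j, r i * r j * (2 / Real.pi - |Real.sin (θ i - θ j)|) =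
      (2 / Real.pi) * (∑ i, r i) ^ 2 - ∑ i, ∑ j, r i * r j * |Real.sin (θ i - θ j)| := by
    rw [sq, Finset.sum_mul_sum, Finset.mul_sum, ← Finset.sum_sub_distrib]
    apply Finset.sum_congr rfl
    intro i _
    rw [Finset.mul_sum, ← Finset.sum_sub_distrib]
    exact Finset.sum_congr rfl fun j _ => by ring
  rw [expand] at hnn
  linarith

lemma eig_im_le {n : ℕ} (L : Matrix (Fin n) (Fin n) ℝ) (hL : IsStdLaplacian L)
    (lam : ℂ) (v : Fin n → ℂ) (hv : v ≠ 0)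
    (heig : (L.map Complex.ofReal).mulVec v = lam • v) : lam.im ≤ 1 / Real.pi := by
  have hpi := Real.pi_pos
  have hn : 0 < n := by
    rcases Nat.eq_zero_or_pos n with h | h
    · exact absurd (funext fun i => absurd h (by subst h; exact i.elim0)) hv
    · exact h
  set r : Fin n → ℝ := fun i => ‖v i‖ with hrdef
  set θ : Fin n → ℝ := fun i => Complex.arg (v i) with hθdef
  set N : ℝ := ∑ i, r i ^ 2 with hNdef
  have hr0 : ∀ i, 0 ≤ r i := fun i => norm_nonneg _
  have hN : 0 < N := by
    obtain ⟨i0, hi0⟩ := Function.ne_iff.mp hv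
    have h1 : 0 < r i0 ^ 2 := by
      have := norm_pos_iff.mpr hi0
      positivity
    have h2 : ∀ i ∈ Finset.univ, 0 ≤ r i ^ 2 := fun i _ => sq_nonneg _
    calc (0:ℝ) < r i0 ^ 2 := h1
    _ ≤ N := Finset.single_le_sum h2 (Finset.mem_univ i0)
  set t : Fin n → Fin n → ℝ := fun i j => ((starRingEnd ℂ) (v i) * v j).im with htdef
  have him : ∀ (c : ℝ) (z : ℂ), ((c : ℂ) * z).im = c * z.im := fun c z => by
    simp [Complex.mul_im]
  -- the eigenvalue identity
  have hmain : lam.im * N = ∑ i, ∑ j, L i j * t i j := by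
    have h1 : ∀ i, ∑ j, (L i j : ℂ) * v j = lam * v i := by
      intro i
      have := congrFun heig i
      simpa [Matrix.mulVec, dotProduct, Matrix.map_apply] using this
    have h2 : ∑ i, (starRingEnd ℂ) (v i) * (lam * v i) = lam * (N : ℂ) := by
      have : ∀ i, (starRingEnd ℂ) (v i) * (lam * v i) =
          lam * ((Complex.normSq (v i) : ℝ) : ℂ) := by
        intro i
        rw [mul_comm ((starRingEnd ℂ) (v i)), mul_assoc, mul_comm (v i)]
        congr 1
        rw [Complex.normSq_eq_conj_mul_self]
      simp_rw [this]
      rw [← Finset.mul_sum]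
      congr 1
      rw [hNdef]
      push_cast
      apply Finset.sum_congr rfl
      intro i _
      rw [← Complex.sq_norm]
      push_cast
      rfl
    have h3 : ∑ i, (starRingEnd ℂ) (v i) * ∑ j, (L i j : ℂ) * v j = lam * (N : ℂ) := by
      rw [← h2]
      exact Finset.sum_congr rfl fun i _ => by rw [h1 i]
    have h4 : (∑ i, (starRingEnd ℂ) (v i) * ∑ j, (L i j : ℂ) * v j).im =
        ∑ i, ∑ j, L i j * t i j := by
      rw [Complex.im_sum]
      apply Finset.sum_congr rfl
      intro i _
      rw [Finset.mul_sum, Complex.im_sum]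
      apply Finset.sum_congr rfl
      intro j _
      have : (starRingEnd ℂ) (v i) * ((L i j : ℂ) * v j) =
          (L i j : ℂ) * ((starRingEnd ℂ) (v i) * v j) := by ring
      rw [this, him]
    rw [← h4, h3]
    simp [Complex.mul_im]
  -- antisymmetry
  have hanti : ∀ i j, t j i = - t i j := by
    intro i j
    have h := Complex.conj_im ((starRingEnd ℂ) (v i) * v j)
    rw [map_mul, Complex.conj_conj, mul_comm] at h
    exact h
  -- 2 S = sum (L i j - L j i) t i j
  have hdouble : 2 * (lam.im * N) = ∑ i, ∑ j, (L i j - L j i) * t i j := by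
    have hB : ∑ i, ∑ j, L j i * t i j = - (lam.im * N) := by
      rw [Finset.sum_comm]
      have : ∀ j i, L j i * t i j = - (L j i * t j i) := by
        intro j i
        rw [hanti j i]  -- t i j = - t j i? careful
        ring
      calc ∑ j, ∑ i, L j i * t i j = ∑ j, ∑ i, - (L j i * t j i) :=
            Finset.sum_congr rfl fun j _ => Finset.sum_congr rfl fun i _ => this j i
      _ = - ∑ j, ∑ i, L j i * t j i := by
            rw [← Finset.sum_neg_distrib]
            exact Finset.sum_congr rfl fun j _ => by rw [Finset.sum_neg_distrib]
      _ = - (lam.im * N) := by rw [← hmain]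
    have : ∑ i, ∑ j, (L i j - L j i) * t i j =
        (∑ i, ∑ j, L i j * t i j) - ∑ i, ∑ j, L j i * t i j := by
      rw [← Finset.sum_sub_distrib]
      exact Finset.sum_congr rfl fun i _ => by
        rw [← Finset.sum_sub_distrib]
        exact Finset.sum_congr rfl fun j _ => by ring
    rw [this, ← hmain, hB]
    ring
  -- entry bound
  have hb : ∀ i j, |L i j - L j i| ≤ 1 / n := by
    intro i j
    rcases eq_or_ne i j with h | h
    · subst h
      simp only [sub_self, abs_zero]
      positivity
    · obtain ⟨h1, h2⟩ := hL.2 i j h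
      obtain ⟨h3, h4⟩ := hL.2 j i (Ne.symm h)
      rw [abs_le]
      constructor <;> nlinarith
  -- |t i j| = r i * r j * |sin (θ i - θ j)|
  have habs_t : ∀ i j, |t i j| = r i * r j * |Real.sin (θ i - θ j)| := by
    intro i j
    have hpol : ∀ k, v k = (r k : ℂ) * Complex.exp (θ k * Complex.I) :=
      fun k => (Complex.norm_mul_exp_arg_mul_I (v k)).symm
    rw [htdef]
    simp only
    rw [hpol i, hpol j]
    rw [map_mul, ← Complex.exp_conj]
    have hconj1 : (starRingEnd ℂ) ((r i : ℂ)) = (r i : ℂ) := Complex.conj_ofReal _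
    have hconj2 : (starRingEnd ℂ) ((θ i : ℂ) * Complex.I) = - (θ i * Complex.I) := by
      rw [map_mul, Complex.conj_ofReal, Complex.conj_I]
      ring
    rw [hconj1, hconj2]
    have hmm : (r i : ℂ) * Complex.exp (-(θ i * Complex.I)) *
        ((r j : ℂ) * Complex.exp (θ j * Complex.I)) =
        ((r i * r j : ℝ) : ℂ) * Complex.exp (((θ j - θ i : ℝ) : ℂ) * Complex.I) := by
      rw [mul_mul_mul_comm, ← Complex.exp_add]
      congr 1
      · push_cast; ring
      · congr 1
        push_cast; ring
    rw [hmm, him, Complex.exp_ofReal_mul_I_im, abs_mul,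
      abs_of_nonneg (mul_nonneg (hr0 i) (hr0 j)), ← neg_sub (θ i) (θ j), Real.sin_neg, abs_neg]
  -- final chain
  have hchain : 2 * (lam.im * N) ≤ (1 / n) * ((2 / Real.pi) * (∑ i, r i) ^ 2) := by
    rw [hdouble]
    calc ∑ i, ∑ j, (L i j - L j i) * t i j
        ≤ ∑ i, ∑ j, (1 / n) * (r i * r j * |Real.sin (θ i - θ j)|) := by
          apply Finset.sum_le_sum
          intro i _
          apply Finset.sum_le_sum
          intro j _
          calc (L i j - L j i) * t i j ≤ |(L i j - L j i) * t i j| := le_abs_self _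
          _ = |L i j - L j i| * |t i j| := abs_mul _ _
          _ ≤ (1 / n) * |t i j| := by
              apply mul_le_mul_of_nonneg_right (hb i j) (abs_nonneg _)
          _ = (1 / n) * (r i * r j * |Real.sin (θ i - θ j)|) := by rw [habs_t i j]
    _ = (1 / n) * ∑ i, ∑ j, r i * r j * |Real.sin (θ i - θ j)| := by
          rw [Finset.mul_sum]
          exact Finset.sum_congr rfl fun i _ => by rw [Finset.mul_sum]
    _ ≤ (1 / n) * ((2 / Real.pi) * (∑ i, r i) ^ 2) := by
          apply mul_le_mul_of_nonneg_left (kernel_ineq r θ hr0)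
          positivity
  have hcs : (∑ i, r i) ^ 2 ≤ n * N := by
    have := sq_sum_le_card_mul_sum_sq (s := Finset.univ) (f := r)
    simpa [hNdef] using this
  have hfin : 2 * (lam.im * N) ≤ (2 / Real.pi) * N := by
    calc 2 * (lam.im * N) ≤ (1 / n) * ((2 / Real.pi) * (∑ i, r i) ^ 2) := hchain
    _ ≤ (1 / n) * ((2 / Real.pi) * (n * N)) := by
        apply mul_le_mul_of_nonneg_left _ (by positivity)
        apply mul_le_mul_of_nonneg_left hcs
        positivity
    _ = (2 / Real.pi) * N := by
        have : (n : ℝ) ≠ 0 := Nat.cast_ne_zero.mpr hn.ne'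
        field_simp
  have h2N : lam.im * N ≤ (1 / Real.pi) * N := by
    have he : 2 * ((1 / Real.pi) * N) = (2 / Real.pi) * N := by ring
    linarith
  exact le_of_mul_le_mul_right h2N hN

lemma ofReal_mul_im (c : ℝ) (z : ℂ) : ((c:ℂ) * z).im = c * z.im := by simp [Complex.mul_im]

noncomputable def ynval (n : ℕ) : ℝ :=
  (∑ x ∈ Finset.Ico 1 ((n-1)/2 + 1), Real.sin (2*Real.pi*x/n)) / n

lemma gsum_eval (n : ℕ) (hn : 1 ≤ n) (c0 : ℝ) (c1 : ℕ → ℝ) :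
    ∑ x ∈ Finset.range n, (if x = 0 then c0 else if x ≤ (n-1)/2 then c1 x else 0)
      = c0 + ∑ x ∈ Finset.Ico 1 ((n-1)/2 + 1), c1 x := by
  set k := (n-1)/2 with hk
  have hkn : k + 1 ≤ n := by omega
  set G : ℕ → ℝ := fun x => if x = 0 then c0 else if x ≤ k then c1 x else 0 with hG
  rw [Finset.range_eq_Ico, ← Finset.sum_Ico_consecutive G (by omega : (0:ℕ) ≤ k+1) hkn,
    ← Finset.sum_Ico_consecutive G (by omega : (0:ℕ) ≤ 1) (by omega : 1 ≤ k+1)]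
  have h1 : ∑ x ∈ Finset.Ico 0 1, G x = c0 := by
    rw [show Finset.Ico 0 1 = Finset.range 1 from by rw [Finset.range_eq_Ico],
      Finset.sum_range_one]
    simp [hG]
  have h2 : ∑ x ∈ Finset.Ico 1 (k+1), G x = ∑ x ∈ Finset.Ico 1 (k+1), c1 x := by
    apply Finset.sum_congr rfl
    intro x hx
    rw [Finset.mem_Ico] at hx
    rw [hG]
    simp only
    rw [if_neg (by omega), if_pos (by omega)]
  have h3 : ∑ x ∈ Finset.Ico (k+1) n, G x = 0 := by
    apply Finset.sum_eq_zero
    intro x hx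
    rw [Finset.mem_Ico] at hx
    rw [hG]
    simp only
    rw [if_neg (by omega), if_neg (by omega)]
  rw [h1, h2, h3, add_zero]

lemma ynval_mem (n : ℕ) (hn : 1 ≤ n) :
    ∃ L : Matrix (Fin n) (Fin n) ℝ, IsStdLaplacian L ∧
      ∃ (lam : ℂ) (v : Fin n → ℂ), v ≠ 0 ∧
        (L.map Complex.ofReal).mulVec v = lam • v ∧ ynval n = lam.im := by
  haveI : NeZero n := ⟨by omega⟩
  have hnR : (n:ℝ) ≠ 0 := Nat.cast_ne_zero.mpr (by omega)
  have hnC : (n:ℂ) ≠ 0 := Nat.cast_ne_zero.mpr (by omega)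
  set g : ℕ → ℝ := fun x => if x = 0 then (((n-1)/2 : ℕ):ℝ)/n
    else if x ≤ (n-1)/2 then -(1/n) else 0 with hg
  set L : Matrix (Fin n) (Fin n) ℝ := fun i j => g ((j - i : Fin n) : ℕ) with hL
  set ζ : ℂ := Complex.exp ((-(2*Real.pi/n) : ℝ) * Complex.I) with hζ
  have hζn : ζ ^ n = 1 := by
    rw [hζ, ← Complex.exp_nat_mul]
    have e : (n:ℂ) * ((-(2*Real.pi/n) : ℝ) * Complex.I) = -(2 * Real.pi * Complex.I) := by
      push_cast
      field_simp
    rw [e, Complex.exp_neg, Complex.exp_two_pi_mul_I, inv_one]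
  have hmod : ∀ a : ℕ, ζ ^ (a % n) = ζ ^ a := by
    intro a
    conv_rhs => rw [← Nat.div_add_mod a n]
    rw [pow_add, pow_mul, hζn, one_pow, one_mul]
  set v : Fin n → ℂ := fun j => ζ ^ (j : ℕ) with hv
  have hζx : ∀ x : ℕ, ζ ^ x = Complex.exp ((-(2*Real.pi*x/n) : ℝ) * Complex.I) := by
    intro x
    rw [hζ, ← Complex.exp_nat_mul]
    congr 1
    push_cast
    ring
  have hvadd : ∀ d i : Fin n, v (d + i) = v d * v i := by
    intro d i
    rw [hv]
    simp only
    rw [Fin.val_add, hmod, pow_add]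
  set lam : ℂ := ∑ d : Fin n, (g (d : ℕ) : ℂ) * v d with hlam
  refine ⟨L, ⟨?_, ?_⟩, lam, v, ?_, ?_, ?_⟩
  · -- row sums
    intro i
    have hre : ∑ j, L i j = ∑ d : Fin n, g (d : ℕ) := by
      apply Fintype.sum_equiv (Equiv.subRight i)
      intro j
      rfl
    rw [hre, Fin.sum_univ_eq_sum_range (fun x => g x) n, hg]
    rw [gsum_eval n hn]
    have : ∑ x ∈ Finset.Ico 1 ((n-1)/2+1), -(1/(n:ℝ)) = (((n-1)/2 : ℕ):ℝ) * -(1/n) := by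
      rw [Finset.sum_const, Nat.card_Ico]
      simp
    rw [this]
    field_simp
    ring
  · -- off-diagonal bounds
    intro i j hij
    have hd : ((j - i : Fin n) : ℕ) ≠ 0 := by
      intro h
      apply hij
      have : (j - i : Fin n) = 0 := Fin.ext (by simpa using h)
      have := sub_eq_zero.mp this
      exact this.symm
    rw [hL]
    simp only [hg]
    rw [if_neg hd]
    have hba : -(1/(n:ℝ)) ≤ 0 := neg_nonpos.mpr (by positivity)
    constructor
    · split
      · exact le_refl _
      · exact hba
    · split
      · exact hba
      · exact le_refl _
  · -- v ≠ 0
    intro h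
    have h0 : v ⟨0, by omega⟩ = 0 := congrFun h _
    rw [hv] at h0
    simp at h0
  · -- eigen equation
    funext i
    have e1 : (L.map Complex.ofReal).mulVec v i = ∑ j, ((L i j : ℝ) : ℂ) * v j := by
      simp [Matrix.mulVec, dotProduct, Matrix.map_apply]
    rw [e1]
    have e2 : ∑ j, ((L i j : ℝ) : ℂ) * v j = ∑ d : Fin n, (g (d : ℕ) : ℂ) * v (d + i) := by
      apply (Fintype.sum_equiv (Equiv.addRight i) _ _ ?_).symm
      intro d
      rw [hL]
      simp only [Equiv.coe_addRight]
      congr 2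
      rw [add_sub_cancel_right]
    rw [e2]
    have e3 : ∑ d : Fin n, (g (d : ℕ) : ℂ) * v (d + i) = lam * v i := by
      rw [hlam, Finset.sum_mul]
      apply Finset.sum_congr rfl
      intro d _
      rw [hvadd d i]
      ring
    rw [e3, Pi.smul_apply, smul_eq_mul]
  · -- imaginary part
    have him : lam.im = ∑ d : Fin n, g (d : ℕ) * (-Real.sin (2*Real.pi*(d:ℕ)/n)) := by
      rw [hlam, Complex.im_sum]
      apply Finset.sum_congr rfl
      intro d _
      rw [hv]
      simp only
      rw [hζx, ofReal_mul_im, Complex.exp_ofReal_mul_I_im]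
      congr 1
      rw [← Real.sin_neg]
    rw [him, Fin.sum_univ_eq_sum_range (fun x => g x * (-Real.sin (2*Real.pi*x/n))) n]
    have e4 : ∀ x : ℕ, g x * (-Real.sin (2*Real.pi*x/n)) =
        if x = 0 then 0 else if x ≤ (n-1)/2 then (1/n) * Real.sin (2*Real.pi*x/n) else 0 := by
      intro x
      rw [hg]
      simp only
      rcases eq_or_ne x 0 with h | h
      · subst h
        rw [if_pos rfl, if_pos rfl]
        simp
      · rw [if_neg h, if_neg h]
        split
        · ring
        · ring
    simp_rw [e4]
    rw [gsum_eval n hn, zero_add]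
    unfold ynval
    rw [Finset.sum_div]
    apply Finset.sum_congr rfl
    intro x _
    ring

lemma sum_sin_tel (a : ℝ) (k : ℕ) :
    2 * Real.sin a * ∑ x ∈ Finset.Ico 1 (k+1), Real.sin (2*x*a)
      = Real.cos a - Real.cos ((2*k+1)*a) := by
  induction k with
  | zero => simp
  | succ k IH =>
    rw [Finset.sum_Ico_succ_top (by omega), mul_add, IH]
    have key : 2 * Real.sin a * Real.sin (2*((k:ℝ)+1)*a) =
        Real.cos ((2*(k:ℝ)+1)*a) - Real.cos ((2*((k:ℝ)+1)+1)*a) := by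
      rw [Real.cos_sub_cos]
      have e1 : ((2*(k:ℝ)+1)*a + (2*((k:ℝ)+1)+1)*a)/2 = 2*((k:ℝ)+1)*a := by ring
      have e2 : ((2*(k:ℝ)+1)*a - (2*((k:ℝ)+1)+1)*a)/2 = -a := by ring
      rw [e1, e2, Real.sin_neg]
      ring
    push_cast
    push_cast at key
    linarith [key]

lemma pi_div_tendsto : Filter.Tendsto (fun n : ℕ => Real.pi / n) Filter.atTop (nhds 0) :=
  tendsto_const_div_atTop_nhds_zero_nat Real.pi

lemma nsin_tendsto :
    Filter.Tendsto (fun n : ℕ => (n : ℝ) * Real.sin (Real.pi / n)) Filter.atTop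
      (nhds Real.pi) := by
  have hslope : Filter.Tendsto (slope Real.sin 0) (nhdsWithin 0 {x | x ≠ 0}) (nhds 1) := by
    have h := hasDerivAt_iff_tendsto_slope.mp (Real.hasDerivAt_sin 0)
    rw [Real.cos_zero] at h
    exact h
  have hwithin : Filter.Tendsto (fun n : ℕ => Real.pi / n) Filter.atTop
      (nhdsWithin 0 {x | x ≠ 0}) := by
    rw [tendsto_nhdsWithin_iff]
    refine ⟨pi_div_tendsto, ?_⟩
    filter_upwards [Filter.eventually_ge_atTop 1] with n hn
    have : (0:ℝ) < Real.pi / n := by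
      apply div_pos Real.pi_pos
      exact_mod_cast Nat.pos_of_ne_zero (by omega)
    exact Set.mem_setOf.mpr (ne_of_gt this)
  have hcomp := hslope.comp hwithin
  have heq : ∀ᶠ n : ℕ in Filter.atTop,
      Real.pi * (slope Real.sin 0 (Real.pi / n)) = (n : ℝ) * Real.sin (Real.pi / n) := by
    filter_upwards [Filter.eventually_ge_atTop 1] with n hn
    have hn0 : (0:ℝ) < n := by exact_mod_cast Nat.pos_of_ne_zero (by omega)
    rw [slope_def_field]
    field_simp
    simp
    ring
  have := (hcomp.const_mul Real.pi).congr' heq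
  simpa using this

lemma ratio_tendsto :
    Filter.Tendsto (fun n : ℕ => ((2*((n-1)/2 : ℕ)+1 : ℕ) : ℝ) / n) Filter.atTop (nhds 1) := by
  have hlow : Filter.Tendsto (fun n : ℕ => ((n:ℝ) - 1) / n) Filter.atTop (nhds 1) := by
    have h1 : Filter.Tendsto (fun n : ℕ => 1 - 1/(n:ℝ)) Filter.atTop (nhds 1) := by
      have := (tendsto_one_div_atTop_nhds_zero_nat (𝕜 := ℝ)).const_sub 1
      simpa using this
    apply h1.congr'
    filter_upwards [Filter.eventually_ge_atTop 1] with n hn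
    have hn0 : (n:ℝ) ≠ 0 := Nat.cast_ne_zero.mpr (by omega)
    field_simp
  apply tendsto_of_tendsto_of_tendsto_of_le_of_le' hlow tendsto_const_nhds
  · filter_upwards [Filter.eventually_ge_atTop 1] with n hn
    have hn0 : (0:ℝ) < n := by exact_mod_cast Nat.pos_of_ne_zero (by omega)
    apply (div_le_div_iff_of_pos_right hn0).mpr
    have h : n - 1 ≤ 2*((n-1)/2) + 1 := by omega
    calc (n:ℝ) - 1 ≤ ((n-1 : ℕ) : ℝ) + 1 - 1 := by
          rw [Nat.cast_sub (by omega : 1 ≤ n)]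
          push_cast
          linarith
    _ = ((n-1 : ℕ) : ℝ) := by ring
    _ ≤ ((2*((n-1)/2 : ℕ)+1 : ℕ) : ℝ) := by exact_mod_cast h
  · filter_upwards [Filter.eventually_ge_atTop 1] with n hn
    have hn0 : (0:ℝ) < n := by exact_mod_cast Nat.pos_of_ne_zero (by omega)
    rw [div_le_one hn0]
    have h : 2*((n-1)/2) + 1 ≤ n := by omega
    exact_mod_cast h

lemma ynval_tendsto : Filter.Tendsto ynval Filter.atTop (nhds (1 / Real.pi)) := by
  have hpi := Real.pi_pos
  have hcos1 : Filter.Tendsto (fun n : ℕ => Real.cos (Real.pi / n)) Filter.atTop (nhds 1) := by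
    have := (Real.continuous_cos.tendsto 0).comp pi_div_tendsto
    simpa [Function.comp_def] using this
  have harg : Filter.Tendsto (fun n : ℕ => ((2*((n-1)/2 : ℕ)+1 : ℕ) : ℝ) * (Real.pi / n))
      Filter.atTop (nhds Real.pi) := by
    have h := ratio_tendsto.mul_const Real.pi
    rw [one_mul] at h
    apply h.congr
    intro n
    ring
  have hcos2 : Filter.Tendsto
      (fun n : ℕ => Real.cos (((2*((n-1)/2 : ℕ)+1 : ℕ) : ℝ) * (Real.pi / n)))
      Filter.atTop (nhds (-1)) := by
    have := (Real.continuous_cos.tendsto Real.pi).comp harg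
    simpa [Real.cos_pi, Function.comp_def] using this
  have hnum := hcos1.sub hcos2
  have hden : Filter.Tendsto (fun n : ℕ => 2 * ((n:ℝ) * Real.sin (Real.pi / n)))
      Filter.atTop (nhds (2 * Real.pi)) := nsin_tendsto.const_mul 2
  have hdiv := hnum.div hden (by positivity)
  have hlim : (1 - -1) / (2 * Real.pi) = 1 / Real.pi := by
    rw [div_eq_div_iff (by positivity) (by positivity)]
    ring
  rw [hlim] at hdiv
  apply hdiv.congr'
  filter_upwards [Filter.eventually_ge_atTop 2] with n hn
  have hn0 : (0:ℝ) < n := by exact_mod_cast Nat.pos_of_ne_zero (by omega)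
  set a : ℝ := Real.pi / n with ha
  have ha0 : 0 < a := div_pos hpi hn0
  have ha1 : a < Real.pi := by
    rw [ha, div_lt_iff₀ hn0]
    have h2 : (2:ℝ) ≤ n := by exact_mod_cast hn
    nlinarith [mul_pos hpi (by linarith : (0:ℝ) < (n:ℝ) - 1)]
  have hsa : 0 < Real.sin a := Real.sin_pos_of_pos_of_lt_pi ha0 ha1
  have htel := sum_sin_tel a ((n-1)/2)
  have hsum_eq : ∑ x ∈ Finset.Ico 1 ((n-1)/2+1), Real.sin (2*(x:ℝ)*a) =
      ∑ x ∈ Finset.Ico 1 ((n-1)/2+1), Real.sin (2*Real.pi*x/n) := by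
    apply Finset.sum_congr rfl
    intro x _
    congr 1
    rw [ha]
    field_simp
  rw [hsum_eq] at htel
  have hcast : ((2*((n-1)/2 : ℕ)+1 : ℕ) : ℝ) = 2*(((n-1)/2 : ℕ) : ℝ)+1 := by push_cast; ring
  simp only [Pi.div_apply]
  rw [hcast]
  unfold ynval
  rw [div_eq_div_iff (by positivity) (ne_of_gt hn0), ← htel]
  ring


/-- `lim_{n→∞} h(n) = 1/π`. -/
theorem hSup_tendsto : Filter.Tendsto hSup Filter.atTop (nhds (1 / Real.pi)) := by
  have hpi := Real.pi_pos
  have hub : ∀ (n : ℕ) (y : ℝ), (y ∈ {y : ℝ | ∃ L : Matrix (Fin n) (Fin n) ℝ,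
      IsStdLaplacian L ∧ ∃ (lam : ℂ) (v : Fin n → ℂ), v ≠ 0 ∧
      (L.map Complex.ofReal).mulVec v = lam • v ∧ y = lam.im}) → y ≤ 1 / Real.pi := by
    rintro n y ⟨L, hL, lam, v, hv, heig, rfl⟩
    exact eig_im_le L hL lam v hv heig
  have hupper : ∀ n, hSup n ≤ 1 / Real.pi := by
    intro n
    apply Real.sSup_le (hub n) (by positivity)
  have hlower : ∀ n, 1 ≤ n → ynval n ≤ hSup n := by
    intro n hn
    exact le_csSup ⟨1 / Real.pi, fun y hy => hub n y hy⟩ (ynval_mem n hn)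
  apply tendsto_of_tendsto_of_tendsto_of_le_of_le' ynval_tendsto tendsto_const_nhds
  · filter_upwards [Filter.eventually_ge_atTop 1] with n hn
    exact hlower n hn
  · filter_upwards with n
    exact hupper n
end
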